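/- Let $K = \mathrm{conv}\{(1,1,1),(1,-1,-1),(-1,1,-1),(-1,-1,1)\} \subseteq \mathbb{R}^3$ (the regular 3-simplex), and for $m = 1,\dots,4$ let $P_m = \frac{1}{3} v_m v_m^*$ be the orthogonal projection onto the span of the $m$-th vertex $v_m$. Then $P_m(K) \subseteq K$ for each $m$, and $\sum_{m=1}^4 \frac{3}{4} P_m = I_3$. -/

import Mathlib

set_option maxHeartbeats 1000000


open Matrix

/-- The vertices of the regular 3-simplex. -/
noncomputable def simplexVertex : Fin 4 → Fin 3 → ℝ :=
  ![![1, 1, 1], ![1, -1, -1], ![-1, 1, -1], ![-1, -1, 1]]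

/-- The orthogonal projection onto the span of the `m`-th vertex. -/
noncomputable def simplexProj (m : Fin 4) : Matrix (Fin 3) (Fin 3) ℝ :=
  (1 / 3 : ℝ) • Matrix.vecMulVec (simplexVertex m) (simplexVertex m)

/-- Convex weights expressing `Pₘ vₖ` as a combination of the vertices. -/
noncomputable def simplexW (m k j : Fin 4) : ℝ :=
  if k = m then (if j = m then 1 else 0) else (if j = m then 0 else 1/3)

lemma fin4_val3 : ((3 : Fin 4) : ℕ) = 3 := rfl

lemma mem_K (w : Fin 4 → ℝ) (hw : ∀ i, 0 ≤ w i) (hs : ∑ i, w i = 1) :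
    (∑ i, w i • simplexVertex i) ∈ convexHull ℝ (Set.range simplexVertex) := by
  have := Finset.centerMass_mem_convexHull Finset.univ (fun i _ => hw i)
    (by rw [hs]; norm_num) (fun i _ => Set.mem_range_self (f := simplexVertex) i)
  rwa [Finset.centerMass, hs, inv_one, one_smul] at this

lemma simplexW_nonneg (m k j : Fin 4) : 0 ≤ simplexW m k j := by
  unfold simplexW; split_ifs <;> norm_num

lemma simplexW_sum (m k : Fin 4) : ∑ j, simplexW m k j = 1 := by
  fin_cases m <;> fin_cases k <;>
    norm_num +decide [simplexW, Fin.sum_univ_four]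

lemma simplexW_eq (m k : Fin 4) :
    (simplexProj m).mulVec (simplexVertex k) = ∑ j, simplexW m k j • simplexVertex j := by
  fin_cases m <;> fin_cases k <;> (funext i; fin_cases i) <;>
    norm_num +decide [simplexW, simplexProj, simplexVertex, mulVec, vecMulVec, dotProduct,
      Fin.sum_univ_three, Fin.sum_univ_four, Matrix.vecHead, Matrix.vecTail, Matrix.cons_val_two, Matrix.cons_val_three]

/-- Each projection onto a vertex of the regular 3-simplex maps the simplex into itself,
and `∑ₘ (3/4) Pₘ = I₃`. -/
theorem stmt_12 :
    (∀ m : Fin 4,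
      (fun x => (simplexProj m).mulVec x) '' convexHull ℝ (Set.range simplexVertex)
        ⊆ convexHull ℝ (Set.range simplexVertex)) ∧
    (∑ m : Fin 4, (3 / 4 : ℝ) • simplexProj m = (1 : Matrix (Fin 3) (Fin 3) ℝ)) := by
  constructor
  · intro m
    have hlin : IsLinearMap ℝ (fun x => (simplexProj m).mulVec x) :=
      ⟨fun x y => Matrix.mulVec_add _ _ _, fun c x => Matrix.mulVec_smul _ _ _⟩
    rw [hlin.image_convexHull]
    apply convexHull_min _ (convex_convexHull ℝ _)
    rintro _ ⟨_, ⟨k, rfl⟩, rfl⟩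
    show (simplexProj m).mulVec (simplexVertex k) ∈ convexHull ℝ (Set.range simplexVertex)
    rw [simplexW_eq m k]
    exact mem_K _ (simplexW_nonneg m k) (simplexW_sum m k)
  · ext i j
    rw [Matrix.sum_apply]
    fin_cases i <;> fin_cases j <;>
      norm_num [simplexProj, simplexVertex, vecMulVec, Fin.sum_univ_four, Matrix.one_apply,
        Matrix.smul_apply, Matrix.vecHead, Matrix.vecTail, Fin.ext_iff, fin4_val3, Matrix.cons_val_two, Matrix.cons_val_three]
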